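/- arXiv:2504.04723 — 11 statements merged into one kernel-verified Lean document; each statement's English description precedes it below -/
import Mathlib

section
/- For every i, j, k ∈ {+1, −1}, the 4×4 complex matrix Π↑↓_{[i,j,k]} := (1/16)( 2 I⊗I + i(X⊗I − I⊗X) + j(Y⊗I − I⊗Y) + k(Z⊗I − I⊗Z) − ij(X⊗Y + Y⊗X) − jk(Y⊗Z + Z⊗Y) − ki(Z⊗X + X⊗Z) ) is positive semidefinite. -/
open Matrix Complex
open scoped Kronecker Matrix ComplexOrder

noncomputable section

/-- Pauli matrix σ_x. -/
def σx : Matrix (Fin 2) (Fin 2) ℂ := !![0, 1; 1, 0]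
/-- Pauli matrix σ_y. -/
def σy : Matrix (Fin 2) (Fin 2) ℂ := !![0, -Complex.I; Complex.I, 0]
/-- Pauli matrix σ_z. -/
def σz : Matrix (Fin 2) (Fin 2) ℂ := !![1, 0; 0, -1]

/-- The two-element set {+1, -1} of outcomes/signs. -/
def pm : Finset ℝ := {1, -1}

/-- Qubit state with Bloch vector m: ρ_m = (1/2)(I + m·σ). -/
def rho (m : Fin 3 → ℝ) : Matrix (Fin 2) (Fin 2) ℂ :=
  (2 : ℂ)⁻¹ • ((1 : Matrix (Fin 2) (Fin 2) ℂ) + (m 0 : ℂ) • σx + (m 1 : ℂ) • σy + (m 2 : ℂ) • σz)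

/-- The antiparallel-configuration effects Π↑↓_{[i,j,k]}. -/
def PiAnti (i j k : ℝ) : Matrix (Fin 2 × Fin 2) (Fin 2 × Fin 2) ℂ :=
  (16 : ℂ)⁻¹ • ((2 : ℂ) • (1 : Matrix (Fin 2 × Fin 2) (Fin 2 × Fin 2) ℂ)
    + (i : ℂ) • (σx ⊗ₖ (1 : Matrix (Fin 2) (Fin 2) ℂ) - (1 : Matrix (Fin 2) (Fin 2) ℂ) ⊗ₖ σx)
    + (j : ℂ) • (σy ⊗ₖ (1 : Matrix (Fin 2) (Fin 2) ℂ) - (1 : Matrix (Fin 2) (Fin 2) ℂ) ⊗ₖ σy)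
    + (k : ℂ) • (σz ⊗ₖ (1 : Matrix (Fin 2) (Fin 2) ℂ) - (1 : Matrix (Fin 2) (Fin 2) ℂ) ⊗ₖ σz)
    - ((i * j : ℝ) : ℂ) • (σx ⊗ₖ σy + σy ⊗ₖ σx)
    - ((j * k : ℝ) : ℂ) • (σy ⊗ₖ σz + σz ⊗ₖ σy)
    - ((k * i : ℝ) : ℂ) • (σz ⊗ₖ σx + σx ⊗ₖ σz))

/-- The GPT effects Π#_{[i,j,k]}. -/
def PiSharp (i j k : ℝ) : Matrix (Fin 2 × Fin 2) (Fin 2 × Fin 2) ℂ :=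
  (16 : ℂ)⁻¹ • ((2 : ℂ) • (1 : Matrix (Fin 2 × Fin 2) (Fin 2 × Fin 2) ℂ)
    + (i : ℂ) • (σx ⊗ₖ (1 : Matrix (Fin 2) (Fin 2) ℂ) + (1 : Matrix (Fin 2) (Fin 2) ℂ) ⊗ₖ σx)
    + (j : ℂ) • (σy ⊗ₖ (1 : Matrix (Fin 2) (Fin 2) ℂ) + (1 : Matrix (Fin 2) (Fin 2) ℂ) ⊗ₖ σy)
    + (k : ℂ) • (σz ⊗ₖ (1 : Matrix (Fin 2) (Fin 2) ℂ) + (1 : Matrix (Fin 2) (Fin 2) ℂ) ⊗ₖ σz)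
    + ((i * j : ℝ) : ℂ) • (σx ⊗ₖ σy + σy ⊗ₖ σx)
    + ((j * k : ℝ) : ℂ) • (σy ⊗ₖ σz + σz ⊗ₖ σy)
    + ((k * i : ℝ) : ℂ) • (σz ⊗ₖ σx + σx ⊗ₖ σz))

end

noncomputable section

/-- The parallel-configuration effects Π↑↑_{[i,j,k]} of Carmeli et al. -/
def PiPar (i j k : ℝ) : Matrix (Fin 2 × Fin 2) (Fin 2 × Fin 2) ℂ :=
  (32 : ℂ)⁻¹ • ((4 : ℂ) • (1 : Matrix (Fin 2 × Fin 2) (Fin 2 × Fin 2) ℂ)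
    + ((Real.sqrt 3 * i : ℝ) : ℂ) • (σx ⊗ₖ (1 : Matrix (Fin 2) (Fin 2) ℂ) + (1 : Matrix (Fin 2) (Fin 2) ℂ) ⊗ₖ σx)
    + ((Real.sqrt 3 * j : ℝ) : ℂ) • (σy ⊗ₖ (1 : Matrix (Fin 2) (Fin 2) ℂ) + (1 : Matrix (Fin 2) (Fin 2) ℂ) ⊗ₖ σy)
    + ((Real.sqrt 3 * k : ℝ) : ℂ) • (σz ⊗ₖ (1 : Matrix (Fin 2) (Fin 2) ℂ) + (1 : Matrix (Fin 2) (Fin 2) ℂ) ⊗ₖ σz)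
    + ((i * j : ℝ) : ℂ) • (σx ⊗ₖ σy + σy ⊗ₖ σx)
    + ((j * k : ℝ) : ℂ) • (σy ⊗ₖ σz + σz ⊗ₖ σy)
    + ((k * i : ℝ) : ℂ) • (σz ⊗ₖ σx + σx ⊗ₖ σz))

/-- The universal spin-flip (transformation) map F(A) = (Tr A)·I − A. -/
def Flip (A : Matrix (Fin 2) (Fin 2) ℂ) : Matrix (Fin 2) (Fin 2) ℂ :=
  A.trace • (1 : Matrix (Fin 2) (Fin 2) ℂ) - A

/-- The map id ⊗ Φ on M₂(ℂ) ⊗ M₂(ℂ), acting as A ⊗ B ↦ A ⊗ Φ(B) extended linearly. -/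
def idTensor (Φ : Matrix (Fin 2) (Fin 2) ℂ → Matrix (Fin 2) (Fin 2) ℂ)
    (M : Matrix (Fin 2 × Fin 2) (Fin 2 × Fin 2) ℂ) : Matrix (Fin 2 × Fin 2) (Fin 2 × Fin 2) ℂ :=
  Matrix.of fun p q => Φ (Matrix.of fun b d => M (p.1, b) (q.1, d)) p.2 q.2

/-- Choi matrix Σ_{k,l} E_{kl} ⊗ Λ(E_{kl}) of a linear map Λ on M₂(ℂ). -/
def Choi (Λ : Matrix (Fin 2) (Fin 2) ℂ →ₗ[ℂ] Matrix (Fin 2) (Fin 2) ℂ) :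
    Matrix (Fin 2 × Fin 2) (Fin 2 × Fin 2) ℂ :=
  ∑ k : Fin 2, ∑ l : Fin 2,
    (Matrix.single k l (1 : ℂ)) ⊗ₖ Λ (Matrix.single k l (1 : ℂ))

/-- Sign value of a Boolean outcome: true ↦ +1, false ↦ −1. -/
def sgn (b : Bool) : ℝ := if b then 1 else -1

/-- Unsharp spin effect P^a_{n̂,λ} = (1/2)(I + λ a n̂·σ). -/
def Peff (n : Fin 3 → ℝ) (lam a : ℝ) : Matrix (Fin 2) (Fin 2) ℂ :=
  (2 : ℂ)⁻¹ • ((1 : Matrix (Fin 2) (Fin 2) ℂ)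
    + ((lam * a * n 0 : ℝ) : ℂ) • σx + ((lam * a * n 1 : ℝ) : ℂ) • σy
    + ((lam * a * n 2 : ℝ) : ℂ) • σz)

/-- Computational basis vector |ab⟩ of ℂ²⊗ℂ². -/
def ket (a b : Fin 2) : Fin 2 × Fin 2 → ℂ := fun p => if p = (a, b) then 1 else 0

/-- Bell vector |φ⁺⟩. -/
def phiP : Fin 2 × Fin 2 → ℂ := ((Real.sqrt 2 : ℝ) : ℂ)⁻¹ • (ket 0 0 + ket 1 1)
/-- Bell vector |φ⁻⟩. -/
def phiM : Fin 2 × Fin 2 → ℂ := ((Real.sqrt 2 : ℝ) : ℂ)⁻¹ • (ket 0 0 - ket 1 1)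
/-- Bell vector |ψ⁺⟩. -/
def psiP : Fin 2 × Fin 2 → ℂ := ((Real.sqrt 2 : ℝ) : ℂ)⁻¹ • (ket 0 1 + ket 1 0)
/-- Bell vector |ψ⁻⟩. -/
def psiM : Fin 2 × Fin 2 → ℂ := ((Real.sqrt 2 : ℝ) : ℂ)⁻¹ • (ket 0 1 - ket 1 0)

/-- The vector |ξ_{[i,j,k]}⟩ = (1/2)(|ψ⁻⟩ − i|φ⁻⟩ + 𝐢 j|φ⁺⟩ + k|ψ⁺⟩). -/
def xi (i j k : ℝ) : Fin 2 × Fin 2 → ℂ :=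
  (2 : ℂ)⁻¹ • (psiM - (i : ℂ) • phiM + (Complex.I * (j : ℂ)) • phiP + (k : ℂ) • psiP)

end

/-- The row vector whose Gram matrix is `PiAnti i j k` (for i,j,k ∈ {±1}). -/
noncomputable def vAnti (i j k : ℝ) : Matrix (Fin 1) (Fin 2 × Fin 2) ℂ :=
  Matrix.of fun _ p =>
    if p = (0, 0) then (1 + Complex.I) / 4
    else if p = (0, 1) then -((i : ℂ) - Complex.I * (j : ℂ)) * (1 + Complex.I) * (1 + (k : ℂ)) / 8
    else if p = (1, 0) then ((i : ℂ) - Complex.I * (j : ℂ)) * (1 + Complex.I) * (1 - (k : ℂ)) / 8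
    else Complex.I * (i : ℂ) * (j : ℂ) * (1 + Complex.I) / 4

set_option maxHeartbeats 2000000 in
/-- each Π↑↓_{[i,j,k]} (i,j,k ∈ {±1}) is positive semidefinite. -/
theorem piAnti_posSemidef :
    ∀ i ∈ pm, ∀ j ∈ pm, ∀ k ∈ pm, (PiAnti i j k).PosSemidef := by
  intro i hi j hj k hk
  have key : PiAnti i j k = (vAnti i j k)ᴴ * (vAnti i j k) := by
    simp only [pm, Finset.mem_insert, Finset.mem_singleton] at hi hj hk
    ext p q
    rcases hi with rfl | rfl <;> rcases hj with rfl | rfl <;> rcases hk with rfl | rfl <;>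
      fin_cases p <;> fin_cases q <;>
        simp [PiAnti, vAnti, σx, σy, σz, Matrix.mul_apply, Fin.sum_univ_one,
          Matrix.kroneckerMap_apply, Matrix.one_apply, Complex.ext_iff, Prod.ext_iff,
          Fin.ext_iff, -Fin.val_eq_zero_iff] <;>
        norm_num
  rw [key]
  exact Matrix.posSemidef_conjTranspose_mul_self _
end

section
/- For every m = (m_x, m_y, m_z) ∈ ℝ³ with ‖m‖ ≤ 1, the marginals of the POVM {Π↑↓_{[i,j,k]}} on the antiparallel pair ρ_m ⊗ ρ_{−m} reproduce the statistics of the sharp spin observables X, Y, Z on ρ_m: for every i ∈ {+1,−1}, Σ_{j,k∈{±1}} Tr[ Π↑↓_{[i,j,k]} (ρ_m ⊗ ρ_{−m}) ] = (1/2)(1 + i·m_x); for every j ∈ {+1,−1}, Σ_{i,k∈{±1}} Tr[ Π↑↓_{[i,j,k]} (ρ_m ⊗ ρ_{−m}) ] = (1/2)(1 + j·m_y); and for every k ∈ {+1,−1}, Σ_{i,j∈{±1}} Tr[ Π↑↓_{[i,j,k]} (ρ_m ⊗ ρ_{−m}) ] = (1/2)(1 + k·m_z). -/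
open Matrix Complex
open scoped Kronecker Matrix ComplexOrder

set_option maxHeartbeats 2000000 in
private lemma tr_eq_aux (m : Fin 3 → ℝ) (i j k : ℝ) :
    (PiAnti i j k * (rho m ⊗ₖ rho (-m))).trace =
    (8:ℂ)⁻¹ * (1 + i*m 0 + j*m 1 + k*m 2 + i*j*(m 0*m 1) + j*k*(m 1*m 2) + k*i*(m 2*m 0)) := by
  simp [PiAnti, rho, σx, σy, σz, Matrix.trace, Matrix.mul_apply, Matrix.one_apply,
    Fintype.sum_prod_type, Fin.sum_univ_two, Matrix.kroneckerMap_apply]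
  ring_nf
  simp only [Complex.I_sq]
  ring

/-- marginals of Π↑↓ on ρ_m ⊗ ρ_{−m} reproduce sharp X, Y, Z statistics. -/
theorem piAnti_marginals (m : Fin 3 → ℝ) (hm : m 0 ^ 2 + m 1 ^ 2 + m 2 ^ 2 ≤ 1) :
    (∀ i ∈ pm, ∑ j ∈ pm, ∑ k ∈ pm, (PiAnti i j k * (rho m ⊗ₖ rho (-m))).trace
        = ((1 / 2 * (1 + i * m 0) : ℝ) : ℂ)) ∧
    (∀ j ∈ pm, ∑ i ∈ pm, ∑ k ∈ pm, (PiAnti i j k * (rho m ⊗ₖ rho (-m))).trace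
        = ((1 / 2 * (1 + j * m 1) : ℝ) : ℂ)) ∧
    (∀ k ∈ pm, ∑ i ∈ pm, ∑ j ∈ pm, (PiAnti i j k * (rho m ⊗ₖ rho (-m))).trace
        = ((1 / 2 * (1 + k * m 2) : ℝ) : ℂ)) := by
  have hpm : ∀ f : ℝ → ℂ, ∑ x ∈ pm, f x = f 1 + f (-1) := fun f =>
    Finset.sum_pair (by norm_num)
  refine ⟨?_, ?_, ?_⟩ <;> intro s hs <;>
    simp only [pm, Finset.mem_insert, Finset.mem_singleton] at hs <;>
    simp only [hpm, tr_eq_aux] <;>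
    rcases hs with rfl | rfl <;> push_cast <;> ring
end

section
/- (Theorem 1) For every λ ∈ [0,1], the unsharp spin observables X^λ, Y^λ, Z^λ are jointly measurable on antiparallel spin pairs: there exists a family of positive semidefinite 4×4 complex matrices {π_{[i,j,k]}}_{i,j,k∈{±1}} with Σ_{i,j,k} π_{[i,j,k]} = I⊗I, such that for every m ∈ ℝ³ with ‖m‖ ≤ 1: Σ_{j,k} Tr[π_{[i,j,k]} (ρ_m ⊗ ρ_{−m})] = (1/2)(1 + λ·i·m_x) for each i ∈ {±1}, Σ_{i,k} Tr[π_{[i,j,k]} (ρ_m ⊗ ρ_{−m})] = (1/2)(1 + λ·j·m_y) for each j ∈ {±1}, and Σ_{i,j} Tr[π_{[i,j,k]} (ρ_m ⊗ ρ_{−m})] = (1/2)(1 + λ·k·m_z) for each k ∈ {±1}. -/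
open Matrix Complex
open scoped Kronecker Matrix ComplexOrder

-- ===== auxiliary lemmas =====
set_option maxHeartbeats 2000000

noncomputable section JM

/-- Unnormalized eigenvector of `PiAnti i j k` (for signs `i j k`). -/
def wvec (i j k : ℝ) : Fin 2 × Fin 2 → ℂ := fun p =>
  !![-(i : ℂ) + Complex.I * j, 1 + (k : ℂ); -1 + (k : ℂ), (i : ℂ) + Complex.I * j] p.1 p.2

lemma sum_pm' {M : Type*} [AddCommMonoid M] (f : ℝ → M) :
    ∑ x ∈ pm, f x = f 1 + f (-1) := by
  rw [pm, Finset.sum_insert (by norm_num), Finset.sum_singleton]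

lemma trace_rho' (m : Fin 3 → ℝ) : (rho m).trace = 1 := by
  simp [rho, σx, σy, σz, Matrix.trace_fin_two, Matrix.one_apply]

lemma key_trace (i j k : ℝ) (m : Fin 3 → ℝ) :
    (PiAnti i j k * (rho m ⊗ₖ rho (-m))).trace
      = (8 : ℂ)⁻¹ * (1 + (i : ℂ) * m 0 + (j : ℂ) * m 1 + (k : ℂ) * m 2
        + (i : ℂ) * j * (m 0 * m 1) + (j : ℂ) * k * (m 1 * m 2) + (k : ℂ) * i * (m 2 * m 0)) := by
  simp only [PiAnti, rho, σx, σy, σz, Matrix.trace, Matrix.diag, Matrix.mul_apply,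
    Fintype.sum_prod_type, Fin.sum_univ_two, Matrix.kroneckerMap_apply, Matrix.smul_apply,
    Matrix.add_apply, Matrix.sub_apply, Matrix.one_apply, Matrix.of_apply, Matrix.cons_val',
    Matrix.cons_val_zero, Matrix.cons_val_one, Matrix.head_cons, Matrix.head_fin_const,
    Matrix.empty_val', Matrix.cons_val_fin_one, Pi.neg_apply, Complex.ofReal_neg, Prod.mk.injEq,
    smul_eq_mul]
  push_cast
  ring_nf
  norm_num

lemma posSemidef_outer' (v : Fin 2 × Fin 2 → ℂ) :
    (Matrix.vecMulVec v (star v)).PosSemidef := by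
  refine Matrix.posSemidef_iff_dotProduct_mulVec.mpr ⟨?_, ?_⟩
  · ext a b
    simp [Matrix.vecMulVec_apply, Matrix.conjTranspose_apply, mul_comm]
  · intro x
    have h : star x ⬝ᵥ (Matrix.vecMulVec v (star v)) *ᵥ x
        = star (star v ⬝ᵥ x) * (star v ⬝ᵥ x) := by
      simp only [dotProduct, Matrix.mulVec, Matrix.vecMulVec_apply, Pi.star_apply,
        star_sum, star_mul', star_star, Finset.mul_sum, Finset.sum_mul]
      rw [Finset.sum_comm]
      congr 1; ext a; congr 1; ext b; ring
    rw [h]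
    exact star_mul_self_nonneg _

lemma psd_smul_real' {A : Matrix (Fin 2 × Fin 2) (Fin 2 × Fin 2) ℂ} (hA : A.PosSemidef)
    (c : ℝ) (hc : 0 ≤ c) : ((c : ℂ) • A).PosSemidef := by
  refine Matrix.posSemidef_iff_dotProduct_mulVec.mpr ⟨?_, ?_⟩
  · unfold Matrix.IsHermitian
    rw [Matrix.conjTranspose_smul, hA.1.eq]
    simp
  · intro x
    rw [Matrix.smul_mulVec, dotProduct_smul, smul_eq_mul]
    exact mul_nonneg (by exact_mod_cast hc) (hA.dotProduct_mulVec_nonneg x)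

lemma piAnti_eq_outer (i j k : ℝ) (hi : i = 1 ∨ i = -1) (hj : j = 1 ∨ j = -1)
    (hk : k = 1 ∨ k = -1) :
    PiAnti i j k = (Complex.ofReal 16⁻¹) • Matrix.vecMulVec (wvec i j k) (star (wvec i j k)) := by
  rcases hi with rfl | rfl <;> rcases hj with rfl | rfl <;> rcases hk with rfl | rfl <;>
    · ext ⟨a, b⟩ ⟨c, d⟩
      fin_cases a <;> fin_cases b <;> fin_cases c <;> fin_cases d <;>
        simp [PiAnti, wvec, σx, σy, σz, Matrix.vecMulVec_apply, Matrix.one_apply,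
          Prod.ext_iff, Complex.ext_iff] <;> norm_num

lemma piAnti_psd (i j k : ℝ) (hi : i = 1 ∨ i = -1) (hj : j = 1 ∨ j = -1)
    (hk : k = 1 ∨ k = -1) : (PiAnti i j k).PosSemidef := by
  rw [piAnti_eq_outer i j k hi hj hk]
  exact psd_smul_real' (posSemidef_outer' _) (16:ℝ)⁻¹ (by norm_num)

lemma sum_piAnti : ∑ i ∈ pm, ∑ j ∈ pm, ∑ k ∈ pm, PiAnti i j k = 1 := by
  simp only [sum_pm']
  ext ⟨a, b⟩ ⟨c, d⟩
  fin_cases a <;> fin_cases b <;> fin_cases c <;> fin_cases d <;>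
    simp [PiAnti, σx, σy, σz, Matrix.one_apply, Prod.ext_iff] <;> (try ring) <;> (try norm_num)

end JM

/-- Theorem 1: X^λ, Y^λ, Z^λ are jointly measurable on antiparallel
spin pairs for every λ ∈ [0,1]. -/
theorem jointly_measurable_antiparallel (lam : ℝ) (hlam : lam ∈ Set.Icc (0 : ℝ) 1) :
    ∃ π : ℝ → ℝ → ℝ → Matrix (Fin 2 × Fin 2) (Fin 2 × Fin 2) ℂ,
      (∀ i ∈ pm, ∀ j ∈ pm, ∀ k ∈ pm, (π i j k).PosSemidef) ∧
      (∑ i ∈ pm, ∑ j ∈ pm, ∑ k ∈ pm, π i j k = 1) ∧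
      ∀ m : Fin 3 → ℝ, m 0 ^ 2 + m 1 ^ 2 + m 2 ^ 2 ≤ 1 →
        (∀ i ∈ pm, ∑ j ∈ pm, ∑ k ∈ pm, (π i j k * (rho m ⊗ₖ rho (-m))).trace
            = ((1 / 2 * (1 + lam * i * m 0) : ℝ) : ℂ)) ∧
        (∀ j ∈ pm, ∑ i ∈ pm, ∑ k ∈ pm, (π i j k * (rho m ⊗ₖ rho (-m))).trace
            = ((1 / 2 * (1 + lam * j * m 1) : ℝ) : ℂ)) ∧
        (∀ k ∈ pm, ∑ i ∈ pm, ∑ j ∈ pm, (π i j k * (rho m ⊗ₖ rho (-m))).trace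
            = ((1 / 2 * (1 + lam * k * m 2) : ℝ) : ℂ)) := by
  refine ⟨fun i j k => (lam : ℂ) • PiAnti i j k + (Complex.ofReal ((1 - lam) / 8)) • 1, ?_, ?_, ?_⟩
  · intro i hi j hj k hk
    have hi' : i = 1 ∨ i = -1 := by simpa [pm] using hi
    have hj' : j = 1 ∨ j = -1 := by simpa [pm] using hj
    have hk' : k = 1 ∨ k = -1 := by simpa [pm] using hk
    exact Matrix.PosSemidef.add
      (psd_smul_real' (piAnti_psd i j k hi' hj' hk') lam hlam.1)
      (psd_smul_real' Matrix.PosSemidef.one ((1 - lam) / 8)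
        (by have := hlam.2; linarith))
  · have h := sum_piAnti
    simp only [sum_pm'] at h ⊢
    have hc : (lam : ℂ) + Complex.ofReal ((1 - lam) / 8) * 8 = 1 := by push_cast; ring
    calc _ = (lam : ℂ) • (PiAnti 1 1 1 + PiAnti 1 1 (-1) + (PiAnti 1 (-1) 1 + PiAnti 1 (-1) (-1))
            + (PiAnti (-1) 1 1 + PiAnti (-1) 1 (-1) + (PiAnti (-1) (-1) 1 + PiAnti (-1) (-1) (-1))))
            + (Complex.ofReal ((1 - lam) / 8) * 8) • (1 : Matrix (Fin 2 × Fin 2) (Fin 2 × Fin 2) ℂ) := by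
          module
      _ = 1 := by rw [h, ← add_smul, hc, one_smul]
  · intro m _
    have hR : ((rho m) ⊗ₖ (rho (-m))).trace = 1 := by
      rw [Matrix.trace_kronecker, trace_rho', trace_rho', one_mul]
    have hterm : ∀ i j k : ℝ,
        ((((lam : ℂ) • PiAnti i j k + (Complex.ofReal ((1 - lam) / 8)) • 1)
            * (rho m ⊗ₖ rho (-m))).trace)
          = (lam : ℂ) * ((8 : ℂ)⁻¹ * (1 + (i : ℂ) * m 0 + (j : ℂ) * m 1 + (k : ℂ) * m 2
            + (i : ℂ) * j * (m 0 * m 1) + (j : ℂ) * k * (m 1 * m 2) + (k : ℂ) * i * (m 2 * m 0)))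
            + Complex.ofReal ((1 - lam) / 8) := by
      intro i j k
      rw [Matrix.add_mul, Matrix.smul_mul, Matrix.smul_mul, Matrix.one_mul, Matrix.trace_add,
        Matrix.trace_smul, Matrix.trace_smul, key_trace, hR]
      simp [smul_eq_mul]
    refine ⟨?_, ?_, ?_⟩ <;> intro a _ <;>
      simp only [sum_pm', hterm] <;> push_cast <;> ring
end

section
/- For every i, j, k ∈ {+1, −1} and all r, s ∈ ℝ³ with ‖r‖ ≤ 1 and ‖s‖ ≤ 1, the real number Tr[ Π#_{[i,j,k]} · (ρ_r ⊗ ρ_s) ] satisfies 0 ≤ Tr[ Π#_{[i,j,k]} (ρ_r ⊗ ρ_s) ] ≤ 1; i.e., the operators Π#_{[i,j,k]} yield valid probabilities on all product (hence all separable) two-qubit states. -/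
open Matrix Complex
open scoped Kronecker Matrix ComplexOrder

set_option maxHeartbeats 2000000 in
private lemma cs3' (x0 x1 x2 y0 y1 y2 : ℝ) :
    (x0*y0+x1*y1+x2*y2)^2 ≤ (x0^2+x1^2+x2^2)*(y0^2+y1^2+y2^2) := by
  nlinarith [sq_nonneg (x0*y1-x1*y0), sq_nonneg (x1*y2-x2*y1), sq_nonneg (x0*y2-x2*y0)]

set_option maxHeartbeats 2000000 in
private lemma key_lower' (a0 a1 a2 b0 b1 b2 : ℝ) (ha : a0^2+a1^2+a2^2 ≤ 1)
    (hb : b0^2+b1^2+b2^2 ≤ 1) :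
    0 ≤ 2 + (a0+b0) + (a1+b1) + (a2+b2) + (a0*b1+a1*b0) + (a1*b2+a2*b1) + (a2*b0+a0*b2) := by
  have h2A : 0 ≤ 2 + (a0+a1+a2) := by
    nlinarith [sq_nonneg (a0-a1), sq_nonneg (a1-a2), sq_nonneg (a0-a2)]
  have hcs := cs3' (1+(a0+a1+a2)-a0) (1+(a0+a1+a2)-a1) (1+(a0+a1+a2)-a2) b0 b1 b2
  have hvb : ((1+(a0+a1+a2)-a0)^2+(1+(a0+a1+a2)-a1)^2+(1+(a0+a1+a2)-a2)^2)*(b0^2+b1^2+b2^2)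
      ≤ (2+(a0+a1+a2))^2 := by
    nlinarith [mul_nonneg (by positivity : (0:ℝ) ≤ (1+(a0+a1+a2)-a0)^2+(1+(a0+a1+a2)-a1)^2+(1+(a0+a1+a2)-a2)^2)
      (by linarith : (0:ℝ) ≤ 1 - (b0^2+b1^2+b2^2))]
  have ht : ((1+(a0+a1+a2)-a0)*b0+(1+(a0+a1+a2)-a1)*b1+(1+(a0+a1+a2)-a2)*b2)^2
      ≤ (2+(a0+a1+a2))^2 := le_trans hcs hvb
  nlinarith [ht, h2A]

set_option maxHeartbeats 2000000 in
private lemma key_upper' (a0 a1 a2 b0 b1 b2 : ℝ) (ha : a0^2+a1^2+a2^2 ≤ 1)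
    (hb : b0^2+b1^2+b2^2 ≤ 1) :
    2 + (a0+b0) + (a1+b1) + (a2+b2) + (a0*b1+a1*b0) + (a1*b2+a2*b1) + (a2*b0+a0*b2) ≤ 16 := by
  have hA2 : (a0+a1+a2)^2 ≤ 3 := by
    nlinarith [sq_nonneg (a0-a1), sq_nonneg (a1-a2), sq_nonneg (a0-a2)]
  have hB2 : (b0+b1+b2)^2 ≤ 3 := by
    nlinarith [sq_nonneg (b0-b1), sq_nonneg (b1-b2), sq_nonneg (b0-b2)]
  have hA : a0+a1+a2 ≤ 2 := by nlinarith [hA2]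
  have hB : b0+b1+b2 ≤ 2 := by nlinarith [hB2]
  have hAB : (a0+a1+a2)*(b0+b1+b2) ≤ 3 := by
    nlinarith [sq_nonneg (a0+a1+a2-(b0+b1+b2)), hA2, hB2]
  have hdot : -(a0*b0+a1*b1+a2*b2) ≤ 1 := by
    nlinarith [sq_nonneg (a0+b0), sq_nonneg (a1+b1), sq_nonneg (a2+b2)]
  nlinarith [hA, hB, hAB, hdot]

set_option maxHeartbeats 2000000 in
private lemma trace_piSharp (i j k : ℝ) (r s : Fin 3 → ℝ) :
    (PiSharp i j k * (rho r ⊗ₖ rho s)).trace =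
      (((2 + i*(r 0 + s 0) + j*(r 1 + s 1) + k*(r 2 + s 2)
        + i*j*(r 0 * s 1 + r 1 * s 0) + j*k*(r 1 * s 2 + r 2 * s 1)
        + k*i*(r 2 * s 0 + r 0 * s 2))/16 : ℝ) : ℂ) := by
  simp [PiSharp, rho, σx, σy, σz, Matrix.trace, Matrix.mul_apply, Fintype.sum_prod_type,
    Fin.sum_univ_succ, Matrix.kroneckerMap_apply, Matrix.one_apply, Matrix.smul_apply,
    Matrix.add_apply, Matrix.sub_apply, Matrix.diag]
  ring_nf
  simp [Complex.I_sq]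
  ring


/-- the Π#_{[i,j,k]} yield valid probabilities on all product two-qubit states. -/
theorem piSharp_valid_on_products :
    ∀ i ∈ pm, ∀ j ∈ pm, ∀ k ∈ pm, ∀ r s : Fin 3 → ℝ,
      r 0 ^ 2 + r 1 ^ 2 + r 2 ^ 2 ≤ 1 → s 0 ^ 2 + s 1 ^ 2 + s 2 ^ 2 ≤ 1 →
      0 ≤ (PiSharp i j k * (rho r ⊗ₖ rho s)).trace ∧
        (PiSharp i j k * (rho r ⊗ₖ rho s)).trace ≤ 1 := by
  intro i hi j hj k hk r s hr hs
  have hi2 : i^2 = 1 := by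
    have hi' : i = 1 ∨ i = -1 := by simpa [pm] using hi
    rcases hi' with h | h <;> rw [h] <;> norm_num
  have hj2 : j^2 = 1 := by
    have hj' : j = 1 ∨ j = -1 := by simpa [pm] using hj
    rcases hj' with h | h <;> rw [h] <;> norm_num
  have hk2 : k^2 = 1 := by
    have hk' : k = 1 ∨ k = -1 := by simpa [pm] using hk
    rcases hk' with h | h <;> rw [h] <;> norm_num
  have ha : (i*r 0)^2 + (j*r 1)^2 + (k*r 2)^2 ≤ 1 := by
    rw [mul_pow, mul_pow, mul_pow, hi2, hj2, hk2]; simpa using hr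
  have hb : (i*s 0)^2 + (j*s 1)^2 + (k*s 2)^2 ≤ 1 := by
    rw [mul_pow, mul_pow, mul_pow, hi2, hj2, hk2]; simpa using hs
  have hlow := key_lower' (i*r 0) (j*r 1) (k*r 2) (i*s 0) (j*s 1) (k*s 2) ha hb
  have hup := key_upper' (i*r 0) (j*r 1) (k*r 2) (i*s 0) (j*s 1) (k*s 2) ha hb
  rw [trace_piSharp]
  constructor
  · rw [show (0:ℂ) = ((0:ℝ):ℂ) by norm_num, Complex.real_le_real]
    nlinarith [hlow]
  · rw [show (1:ℂ) = ((1:ℝ):ℂ) by norm_num, Complex.real_le_real]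
    nlinarith [hup]
end

section
/- (core of Theorem 2) For every m = (m_x, m_y, m_z) ∈ ℝ³ with ‖m‖ ≤ 1, the marginals of {Π#_{[i,j,k]}} on two parallel copies ρ_m ⊗ ρ_m reproduce the statistics of the sharp spin observables X, Y, Z on ρ_m: for every i ∈ {+1,−1}, Σ_{j,k∈{±1}} Tr[ Π#_{[i,j,k]} (ρ_m ⊗ ρ_m) ] = (1/2)(1 + i·m_x); for every j ∈ {+1,−1}, Σ_{i,k∈{±1}} Tr[ Π#_{[i,j,k]} (ρ_m ⊗ ρ_m) ] = (1/2)(1 + j·m_y); and for every k ∈ {+1,−1}, Σ_{i,j∈{±1}} Tr[ Π#_{[i,j,k]} (ρ_m ⊗ ρ_m) ] = (1/2)(1 + k·m_z). -/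
open Matrix Complex
open scoped Kronecker Matrix ComplexOrder

lemma trace_key (m : Fin 3 → ℝ) (i j k : ℝ) :
    (PiSharp i j k * (rho m ⊗ₖ rho m)).trace
      = (8 : ℂ)⁻¹ * (1 + i * m 0 + j * m 1 + k * m 2
        + i * j * (m 0 * m 1) + j * k * (m 1 * m 2) + k * i * (m 2 * m 0)) := by
  simp only [PiSharp, rho, σx, σy, σz, Matrix.trace, Matrix.diag, Matrix.mul_apply,
    Fintype.sum_prod_type, Fin.sum_univ_two, Matrix.kroneckerMap_apply,
    Matrix.smul_apply, Matrix.add_apply, Matrix.one_apply, Matrix.of_apply,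
    Matrix.cons_val', Matrix.cons_val_zero, Matrix.cons_val_one, Matrix.head_cons,
    Matrix.head_fin_const, Matrix.empty_val', Matrix.cons_val_fin_one, smul_eq_mul,
    Prod.mk.injEq, Complex.ofReal_mul]
  push_cast
  ring_nf
  simp [Complex.I_sq]
  ring

/-- core of Theorem 2: marginals of Π# on ρ_m ⊗ ρ_m reproduce
sharp X, Y, Z statistics. -/
theorem piSharp_marginals (m : Fin 3 → ℝ) (hm : m 0 ^ 2 + m 1 ^ 2 + m 2 ^ 2 ≤ 1) :
    (∀ i ∈ pm, ∑ j ∈ pm, ∑ k ∈ pm, (PiSharp i j k * (rho m ⊗ₖ rho m)).trace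
        = ((1 / 2 * (1 + i * m 0) : ℝ) : ℂ)) ∧
    (∀ j ∈ pm, ∑ i ∈ pm, ∑ k ∈ pm, (PiSharp i j k * (rho m ⊗ₖ rho m)).trace
        = ((1 / 2 * (1 + j * m 1) : ℝ) : ℂ)) ∧
    (∀ k ∈ pm, ∑ i ∈ pm, ∑ j ∈ pm, (PiSharp i j k * (rho m ⊗ₖ rho m)).trace
        = ((1 / 2 * (1 + k * m 2) : ℝ) : ℂ)) := by
  refine ⟨?_, ?_, ?_⟩ <;> intro a ha <;>
    simp only [pm, Finset.mem_insert, Finset.mem_singleton] at ha <;>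
    rcases ha with rfl | rfl <;>
    simp only [pm, Finset.sum_insert (by norm_num : (1:ℝ) ∉ ({-1} : Finset ℝ)),
      Finset.sum_singleton, trace_key] <;>
    push_cast <;> ring
end

section
/- (Theorem 3) Let Λ : M₂(ℂ) → M₂(ℂ) be a completely positive trace-preserving linear map (i.e., trace preserving with positive semidefinite Choi matrix). Suppose a finite family of unsharp spin observables {σ_{n̂_j, λ'}}_{j=1}^N (with unit directions n̂_j ∈ ℝ³ and sharpness λ' ∈ [0,1]) is jointly measurable on the configuration ρ ⊗ Λ(ρ): there is a POVM {π_a}_{a ∈ {±1}^N} on ℂ²⊗ℂ² such that Tr[ρ_m P^{a_j}_{n̂_j,λ'}] = Σ_{a : a_j fixed} Tr[(ρ_m ⊗ Λ(ρ_m)) π_a] for all m with ‖m‖ ≤ 1 and all j, a_j. Then the same observables with the same sharpness λ' are jointly measurable on the parallel configuration: there is a POVM {π'_a} on ℂ²⊗ℂ² with Tr[ρ_m P^{a_j}_{n̂_j,λ'}] = Σ_{a : a_j fixed} Tr[(ρ_m ⊗ ρ_m) π'_a] for all such m, j, a_j. -/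
open Matrix Complex
open scoped Kronecker Matrix ComplexOrder

noncomputable section AuxCPTP

variable (Λ : Matrix (Fin 2) (Fin 2) ℂ →ₗ[ℂ] Matrix (Fin 2) (Fin 2) ℂ)

def Ndual (M : Matrix (Fin 2 × Fin 2) (Fin 2 × Fin 2) ℂ) :
    Matrix (Fin 2 × Fin 2) (Fin 2 × Fin 2) ℂ :=
  Matrix.of fun pr qs => ∑ b : Fin 2, ∑ d : Fin 2,
    M (pr.1, b) (qs.1, d) * Choi Λ (qs.2, d) (pr.2, b)

lemma choi_apply (k l a c : Fin 2) :
    Choi Λ (k, a) (l, c) = Λ (Matrix.single k l 1) a c := by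
  fin_cases k <;> fin_cases l <;>
    simp [Choi, Matrix.sum_apply, Matrix.kroneckerMap_apply, Fin.sum_univ_two,
      Matrix.single]

lemma lam_apply (B : Matrix (Fin 2) (Fin 2) ℂ) (a c : Fin 2) :
    Λ B a c = ∑ s : Fin 2, ∑ r : Fin 2, B s r * Choi Λ (s, a) (r, c) := by
  conv_lhs => rw [Matrix.matrix_eq_sum_single B]
  rw [map_sum]
  simp only [map_sum, Matrix.sum_apply]
  refine Finset.sum_congr rfl fun s _ => Finset.sum_congr rfl fun r _ => ?_
  rw [choi_apply]
  have h1 : Matrix.single s r (B s r) = (B s r) • Matrix.single s r (1:ℂ) := by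
    simp
  rw [h1, _root_.map_smul]
  simp [Matrix.smul_apply]

lemma trace_N (A B : Matrix (Fin 2) (Fin 2) ℂ) (M : Matrix (Fin 2 × Fin 2) (Fin 2 × Fin 2) ℂ) :
    ((A ⊗ₖ Λ B) * M).trace = ((A ⊗ₖ B) * Ndual Λ M).trace := by
  simp only [Matrix.trace, Matrix.diag, Matrix.mul_apply, Ndual, Matrix.kroneckerMap_apply,
    Matrix.of_apply, lam_apply Λ B]
  simp only [Fintype.sum_prod_type, Fin.sum_univ_two]
  ring

end AuxCPTP

noncomputable section Aux2
variable (Λ : Matrix (Fin 2) (Fin 2) ℂ →ₗ[ℂ] Matrix (Fin 2) (Fin 2) ℂ)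

def NdualL : Matrix (Fin 2 × Fin 2) (Fin 2 × Fin 2) ℂ →ₗ[ℂ]
    Matrix (Fin 2 × Fin 2) (Fin 2 × Fin 2) ℂ where
  toFun := Ndual Λ
  map_add' M N := by
    ext pr qs
    simp [Ndual, add_mul, Finset.sum_add_distrib]
  map_smul' c M := by
    ext pr qs
    simp [Ndual, Finset.mul_sum, mul_assoc]
    ring

lemma Ndual_one (hTP : ∀ A, (Λ A).trace = A.trace) : Ndual Λ 1 = 1 := by
  ext ⟨p, r⟩ ⟨q, s⟩
  simp only [Ndual, Matrix.of_apply, Matrix.one_apply, Prod.mk.injEq]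
  by_cases hpq : p = q
  · subst hpq
    have h2 := hTP (Matrix.single s r (1:ℂ))
    simp only [Matrix.trace, Matrix.diag, Fin.sum_univ_two] at h2
    simp only [true_and, choi_apply, Fin.sum_univ_two]
    fin_cases r <;> fin_cases s <;> simp_all [Matrix.single] <;> linear_combination h2
  · simp [hpq]

open scoped MatrixOrder in
set_option maxHeartbeats 1000000 in
lemma Ndual_posSemidef (hCP : (Choi Λ).PosSemidef)
    {M : Matrix (Fin 2 × Fin 2) (Fin 2 × Fin 2) ℂ} (hM : M.PosSemidef) :
    (Ndual Λ M).PosSemidef := by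
  obtain ⟨P, hP⟩ : ∃ P : Matrix (Fin 2 × Fin 2) (Fin 2 × Fin 2) ℂ, M = Pᴴ * P :=
    CStarAlgebra.nonneg_iff_eq_star_mul_self.mp hM.nonneg
  obtain ⟨Q, hQ⟩ : ∃ Q : Matrix (Fin 2 × Fin 2) (Fin 2 × Fin 2) ℂ, (Choi Λ)ᵀ = Qᴴ * Q :=
    CStarAlgebra.nonneg_iff_eq_star_mul_self.mp hCP.transpose.nonneg
  have hMe : ∀ pb qd, M pb qd = ∑ i, (starRingEnd ℂ) (P i pb) * P i qd := by
    intro pb qd; rw [hP]; simp [Matrix.mul_apply, Matrix.conjTranspose_apply]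
  have hCe : ∀ rb sd, Choi Λ sd rb = ∑ j, (starRingEnd ℂ) (Q j rb) * Q j sd := by
    intro rb sd
    have := congrArg (fun X => X rb sd) hQ
    simpa [Matrix.mul_apply, Matrix.conjTranspose_apply, Matrix.transpose_apply] using this
  have key : ∃ R : Matrix ((Fin 2 × Fin 2) × (Fin 2 × Fin 2)) (Fin 2 × Fin 2) ℂ,
      Ndual Λ M = Rᴴ * R := by
    refine ⟨Matrix.of fun ij pr => ∑ b : Fin 2, P ij.1 (pr.1, b) * Q ij.2 (pr.2, b), ?_⟩
    ext ⟨p, r⟩ ⟨q, s⟩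
    simp only [Ndual, Matrix.of_apply, Matrix.mul_apply, Matrix.conjTranspose_apply, hMe, hCe]
    simp only [Fintype.sum_prod_type, Fin.sum_univ_two, star_mul', star_add,
      RCLike.star_def, map_add, _root_.map_mul]
    ring
  obtain ⟨R, hRR⟩ := key
  rw [hRR]
  exact Matrix.posSemidef_conjTranspose_mul_self R

end Aux2


/-- Theorem 3: if a family of unsharp spin observables is jointly
measurable on the configuration ρ ⊗ Λ(ρ) for a CPTP map Λ, then it is jointly
measurable (with the same sharpness) on the parallel configuration ρ ⊗ ρ. -/
theorem cptp_config_no_advantage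
    (Λ : Matrix (Fin 2) (Fin 2) ℂ →ₗ[ℂ] Matrix (Fin 2) (Fin 2) ℂ)
    (hCP : (Choi Λ).PosSemidef) (hTP : ∀ A, (Λ A).trace = A.trace)
    (N : ℕ) (n : Fin N → (Fin 3 → ℝ))
    (hn : ∀ j, (n j 0) ^ 2 + (n j 1) ^ 2 + (n j 2) ^ 2 = 1)
    (lam : ℝ) (hlam : lam ∈ Set.Icc (0 : ℝ) 1)
    (π : (Fin N → Bool) → Matrix (Fin 2 × Fin 2) (Fin 2 × Fin 2) ℂ)
    (hpos : ∀ a, (π a).PosSemidef) (hsum : ∑ a, π a = 1)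
    (hmarg : ∀ m : Fin 3 → ℝ, m 0 ^ 2 + m 1 ^ 2 + m 2 ^ 2 ≤ 1 →
      ∀ (j : Fin N) (b : Bool),
        (rho m * Peff (n j) lam (sgn b)).trace
          = ∑ a ∈ Finset.univ.filter (fun a : Fin N → Bool => a j = b),
              ((rho m ⊗ₖ Λ (rho m)) * π a).trace) :
    ∃ π' : (Fin N → Bool) → Matrix (Fin 2 × Fin 2) (Fin 2 × Fin 2) ℂ,
      (∀ a, (π' a).PosSemidef) ∧ (∑ a, π' a = 1) ∧
      ∀ m : Fin 3 → ℝ, m 0 ^ 2 + m 1 ^ 2 + m 2 ^ 2 ≤ 1 →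
        ∀ (j : Fin N) (b : Bool),
          (rho m * Peff (n j) lam (sgn b)).trace
            = ∑ a ∈ Finset.univ.filter (fun a : Fin N → Bool => a j = b),
                ((rho m ⊗ₖ rho m) * π' a).trace := by
  refine ⟨fun a => Ndual Λ (π a), fun a => Ndual_posSemidef Λ hCP (hpos a), ?_, ?_⟩
  · rw [show (∑ a, Ndual Λ (π a)) = Ndual Λ (∑ a, π a) from (map_sum (NdualL Λ) π _).symm,
      hsum, Ndual_one Λ hTP]
  · intro m hm j b
    rw [hmarg m hm j b]
    exact Finset.sum_congr rfl fun a _ => trace_N Λ (rho m) (rho m) (π a)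
end

section
/- (Appendix III computation) Let μ ∈ [0,1] and F_μ(ρ_m) := (1/2)(I − μ(m_x X + m_y Y + m_z Z)). For every m ∈ ℝ³ with ‖m‖ ≤ 1: for each i ∈ {±1}, Σ_{j,k∈{±1}} Tr[ Π↑↓_{[i,j,k]} (ρ_m ⊗ F_μ(ρ_m)) ] = (1/2)( 1 + ((1+μ)/2)·i·m_x ); for each j ∈ {±1}, Σ_{i,k∈{±1}} Tr[ Π↑↓_{[i,j,k]} (ρ_m ⊗ F_μ(ρ_m)) ] = (1/2)( 1 + ((1+μ)/2)·j·m_y ); and for each k ∈ {±1}, Σ_{i,j∈{±1}} Tr[ Π↑↓_{[i,j,k]} (ρ_m ⊗ F_μ(ρ_m)) ] = (1/2)( 1 + ((1+μ)/2)·k·m_z ). -/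
open Matrix Complex
open scoped Kronecker Matrix ComplexOrder

section AuxPiAnti

lemma aux_tr_one (n : Fin 3 → ℝ) : (rho n).trace = 1 := by
  simp [rho, Matrix.trace, Matrix.diag, Fin.sum_univ_two, σx, σy, σz, Matrix.one_apply]
  ring

lemma aux_tr_x (n : Fin 3 → ℝ) : (σx * rho n).trace = (n 0 : ℂ) := by
  simp [rho, Matrix.trace, Matrix.diag, Matrix.mul_apply, Fin.sum_univ_two, σx, σy, σz,
    Matrix.one_apply]
  ring

lemma aux_tr_y (n : Fin 3 → ℝ) : (σy * rho n).trace = (n 1 : ℂ) := by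
  simp [rho, Matrix.trace, Matrix.diag, Matrix.mul_apply, Fin.sum_univ_two, σx, σy, σz,
    Matrix.one_apply]
  linear_combination (-(n 1 : ℂ)) * Complex.I_sq

lemma aux_tr_z (n : Fin 3 → ℝ) : (σz * rho n).trace = (n 2 : ℂ) := by
  simp [rho, Matrix.trace, Matrix.diag, Matrix.mul_apply, Fin.sum_univ_two, σx, σy, σz,
    Matrix.one_apply]
  ring

lemma aux_key (μ : ℝ) (m : Fin 3 → ℝ) (i j k : ℝ) :
    (PiAnti i j k * (rho m ⊗ₖ rho (-(μ • m)))).trace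
    = (16 : ℂ)⁻¹ * (2 + (1+μ) * (i * m 0 + j * m 1 + k * m 2)
        + 2*μ*(i*j*(m 0 * m 1) + j*k*(m 1 * m 2) + k*i*(m 2 * m 0))) := by
  simp only [PiAnti, Matrix.smul_mul, Matrix.add_mul, Matrix.sub_mul, Matrix.one_mul,
    ← Matrix.mul_kronecker_mul, Matrix.one_mul, Matrix.mul_one,
    Matrix.trace_smul, Matrix.trace_add, Matrix.trace_sub, Matrix.trace_kronecker,
    aux_tr_one, aux_tr_x, aux_tr_y, aux_tr_z, smul_eq_mul, mul_one, one_mul]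
  simp only [Pi.neg_apply, Pi.smul_apply, smul_eq_mul]
  push_cast
  ring

end AuxPiAnti

/-- Appendix III: marginals of Π↑↓ on ρ_m ⊗ F_μ(ρ_m) give the
statistics of the unsharp observables with sharpness (1+μ)/2, where
F_μ(ρ_m) = (1/2)(I − μ m·σ) = ρ_{−μm}. -/
theorem piAnti_marginals_Fmu (μ : ℝ) (hμ : μ ∈ Set.Icc (0 : ℝ) 1)
    (m : Fin 3 → ℝ) (hm : m 0 ^ 2 + m 1 ^ 2 + m 2 ^ 2 ≤ 1) :
    (∀ i ∈ pm, ∑ j ∈ pm, ∑ k ∈ pm, (PiAnti i j k * (rho m ⊗ₖ rho (-(μ • m)))).trace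
        = ((1 / 2 * (1 + (1 + μ) / 2 * i * m 0) : ℝ) : ℂ)) ∧
    (∀ j ∈ pm, ∑ i ∈ pm, ∑ k ∈ pm, (PiAnti i j k * (rho m ⊗ₖ rho (-(μ • m)))).trace
        = ((1 / 2 * (1 + (1 + μ) / 2 * j * m 1) : ℝ) : ℂ)) ∧
    (∀ k ∈ pm, ∑ i ∈ pm, ∑ j ∈ pm, (PiAnti i j k * (rho m ⊗ₖ rho (-(μ • m)))).trace
        = ((1 / 2 * (1 + (1 + μ) / 2 * k * m 2) : ℝ) : ℂ)) := by
  have h1 : (1 : ℝ) ∉ ({-1} : Finset ℝ) := by norm_num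
  refine ⟨?_, ?_, ?_⟩ <;> intro a _ <;>
    simp only [pm, Finset.sum_insert h1, Finset.sum_singleton, aux_key] <;>
    (push_cast; ring)
end

section
/- (Appendix I orthogonality) For (i,j,k), (i',j',k') ∈ {+1,−1}³, the vectors |ξ_{[i,j,k]}⟩ := (1/2)( |ψ⁻⟩ − i|φ⁻⟩ + 𝐢 j|φ⁺⟩ + k|ψ⁺⟩ ) satisfy: ⟨ξ_{[i,j,k]} | ξ_{[i',j',k']}⟩ = 0 if and only if the triples (i,j,k) and (i',j',k') differ in exactly two of their three coordinates (equivalently, ii' + jj' + kk' = −1). -/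
open Matrix Complex
open scoped Kronecker Matrix ComplexOrder

lemma xi_inner (i j k i' j' k' : ℝ) :
    star (xi i j k) ⬝ᵥ xi i' j' k' = (4:ℂ)⁻¹ * (1 + i*i' + j*j' + k*k') := by
  simp only [xi, psiM, phiM, phiP, psiP, ket, dotProduct, Pi.star_apply, Pi.smul_apply,
    Pi.add_apply, Pi.sub_apply, smul_eq_mul, Fintype.sum_prod_type, Fin.sum_univ_two]
  simp only [Prod.mk.injEq, Fin.isValue]
  norm_num [star_mul', Complex.ext_iff]
  ring_nf
  refine ⟨?_, trivial⟩
  rw [Real.sq_sqrt (by norm_num : (0:ℝ) ≤ 2)]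
  ring

/-- Appendix I orthogonality: ⟨ξ_{[i,j,k]} | ξ_{[i',j',k']}⟩ = 0
iff the sign triples differ in exactly two coordinates, i.e. ii' + jj' + kk' = −1. -/
theorem xi_orthogonality :
    ∀ i ∈ pm, ∀ j ∈ pm, ∀ k ∈ pm, ∀ i' ∈ pm, ∀ j' ∈ pm, ∀ k' ∈ pm,
      (star (xi i j k) ⬝ᵥ xi i' j' k' = 0 ↔ i * i' + j * j' + k * k' = -1) := by
  
  intro i _ j _ k _ i' _ j' _ k' _
  rw [xi_inner]
  have hcast : (1 : ℂ) + i*i' + j*j' + k*k' = ((1 + i*i' + j*j' + k*k' : ℝ) : ℂ) := by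
    push_cast; ring
  rw [hcast, mul_eq_zero]
  constructor
  · rintro (h | h)
    · norm_num at h
    · have := Complex.ofReal_eq_zero.mp h
      linarith
  · intro h
    right
    rw [show (1 + i*i' + j*j' + k*k' : ℝ) = 0 by linarith]
    norm_num
end

section
/- (Appendix II positivity) For every i, j, k ∈ {+1, −1} and every s = (s_x, s_y, s_z) ∈ ℝ³ with s_x² + s_y² + s_z² ≤ 1, the 2×2 Hermitian matrix (1/32)[ (2 − i s_x − j s_y − k s_z) I + i(1 − j s_y − k s_z) X + j(1 − k s_z − i s_x) Y + k(1 − i s_x − j s_y) Z ] is positive semidefinite. -/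
open Matrix Complex
open scoped Kronecker Matrix ComplexOrder

set_option maxHeartbeats 1600000 in
lemma psd_aux (α a b c : ℝ) (hα : 0 ≤ α) (h : a ^ 2 + b ^ 2 + c ^ 2 ≤ α ^ 2) :
    (((32 : ℂ)⁻¹ • ((α : ℂ) • (1 : Matrix (Fin 2) (Fin 2) ℂ)
      + (a : ℂ) • σx + (b : ℂ) • σy + (c : ℂ) • σz)) :
        Matrix (Fin 2) (Fin 2) ℂ).PosSemidef := by
  rw [Matrix.posSemidef_iff_dotProduct_mulVec]
  constructor
  · ext i j
    fin_cases i <;> fin_cases j <;>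
      simp [σx, σy, σz, Matrix.conjTranspose_apply, Matrix.one_apply, Complex.ext_iff] <;>
      ring
  · intro x
    have key : star x ⬝ᵥ (((32 : ℂ)⁻¹ • ((α : ℂ) • (1 : Matrix (Fin 2) (Fin 2) ℂ)
        + (a : ℂ) • σx + (b : ℂ) • σy + (c : ℂ) • σz)) *ᵥ x)
        = (((32 : ℝ)⁻¹ : ℝ) : ℂ) * ((α + c) * (starRingEnd ℂ (x 0) * x 0)
          + (α - c) * (starRingEnd ℂ (x 1) * x 1)
          + ((a : ℂ) - (b : ℂ) * Complex.I) * (starRingEnd ℂ (x 0) * x 1)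
          + ((a : ℂ) + (b : ℂ) * Complex.I) * (starRingEnd ℂ (x 1) * x 0)) := by
      simp [dotProduct, Matrix.mulVec, Fin.sum_univ_two, σx, σy, σz,
        Matrix.one_apply, Pi.star_apply]
      ring
    rw [key]
    rw [Complex.le_def]
    constructor
    · simp only [Complex.add_re, Complex.mul_re, Complex.mul_im, Complex.add_im,
        Complex.sub_re, Complex.sub_im, Complex.ofReal_re, Complex.ofReal_im,
        Complex.I_re, Complex.I_im, Complex.inv_re, Complex.inv_im,
        Complex.conj_re, Complex.conj_im, Complex.normSq_ofNat, Complex.zero_re]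
      have h1 : 0 ≤ (α ^ 2 - a ^ 2 - b ^ 2 - c ^ 2) * ((x 1).re ^ 2 + (x 1).im ^ 2) := by
        nlinarith [sq_nonneg (x 1).re, sq_nonneg (x 1).im]
      have h2 : 0 ≤ α - c := by nlinarith [sq_nonneg b, sq_nonneg a]
      have h3 : 0 ≤ α + c := by nlinarith [sq_nonneg b, sq_nonneg a]
      rcases eq_or_lt_of_le h3 with h0 | h0
      · have hc : c = -α := by linarith
        have ha : a = 0 := by
          have : a ^ 2 ≤ 0 := by nlinarith [sq_nonneg b]
          nlinarith [sq_nonneg a]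
        have hb : b = 0 := by
          have : b ^ 2 ≤ 0 := by nlinarith [sq_nonneg a]
          nlinarith [sq_nonneg b]
        subst hc ha hb
        nlinarith [mul_nonneg h2 (add_nonneg (sq_nonneg (x 1).re) (sq_nonneg (x 1).im))]
      · nlinarith [sq_nonneg ((α + c) * (x 0).re + a * (x 1).re + b * (x 1).im),
          sq_nonneg ((α + c) * (x 0).im + a * (x 1).im - b * (x 1).re), h1, h0,
          mul_nonneg h2 (add_nonneg (sq_nonneg (x 1).re) (sq_nonneg (x 1).im))]
    · simp only [Complex.add_im, Complex.mul_re, Complex.mul_im, Complex.add_re,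
        Complex.sub_re, Complex.sub_im, Complex.ofReal_re, Complex.ofReal_im,
        Complex.I_re, Complex.I_im, Complex.inv_re, Complex.inv_im,
        Complex.conj_re, Complex.conj_im, Complex.zero_im]
      ring

set_option maxHeartbeats 1000000 in
/-- Appendix II: positivity of the 2×2 operators arising from the
map Λ_{[i,j,k]} applied to an arbitrary qubit state ρ_s. -/
theorem appendixII_posSemidef :
    ∀ i ∈ pm, ∀ j ∈ pm, ∀ k ∈ pm, ∀ s : Fin 3 → ℝ,
      s 0 ^ 2 + s 1 ^ 2 + s 2 ^ 2 ≤ 1 →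
      (((32 : ℂ)⁻¹ • (((2 - i * s 0 - j * s 1 - k * s 2 : ℝ) : ℂ) • (1 : Matrix (Fin 2) (Fin 2) ℂ)
        + ((i * (1 - j * s 1 - k * s 2) : ℝ) : ℂ) • σx
        + ((j * (1 - k * s 2 - i * s 0) : ℝ) : ℂ) • σy
        + ((k * (1 - i * s 0 - j * s 1) : ℝ) : ℂ) • σz)) :
          Matrix (Fin 2) (Fin 2) ℂ).PosSemidef := by
  intro i hi j hj k hk s hs
  simp only [pm, Finset.mem_insert, Finset.mem_singleton] at hi hj hk
  rcases hi with rfl | rfl <;> rcases hj with rfl | rfl <;> rcases hk with rfl | rfl <;>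
    exact psd_aux _ _ _ _
      (by nlinarith [hs, sq_nonneg (s 0 - s 1), sq_nonneg (s 1 - s 2), sq_nonneg (s 0 - s 2),
        sq_nonneg (s 0 + s 1), sq_nonneg (s 1 + s 2), sq_nonneg (s 0 + s 2)])
      (by nlinarith [hs])
end

section
/- For i, j, k ∈ {+1, −1}, define Π↑↑_{[i,j,k]} := (1/32)( 4 I⊗I + √3[ i(X⊗I + I⊗X) + j(Y⊗I + I⊗Y) + k(Z⊗I + I⊗Z) ] + ij(X⊗Y + Y⊗X) + jk(Y⊗Z + Z⊗Y) + ki(Z⊗X + X⊗Z) ). Then: (1) each Π↑↑_{[i,j,k]} is positive semidefinite; (2) Σ_{i,j,k∈{±1}} Π↑↑_{[i,j,k]} = I⊗I; and (3) for every m ∈ ℝ³ with ‖m‖ ≤ 1, the marginals on two parallel copies reproduce the unsharp spin statistics with sharpness √3/2: Σ_{j,k} Tr[Π↑↑_{[i,j,k]} (ρ_m⊗ρ_m)] = (1/2)(1 + (√3/2)·i·m_x) for each i ∈ {±1}, Σ_{i,k} Tr[Π↑↑_{[i,j,k]} (ρ_m⊗ρ_m)] = (1/2)(1 + (√3/2)·j·m_y)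 for each j ∈ {±1}, and Σ_{i,j} Tr[Π↑↑_{[i,j,k]} (ρ_m⊗ρ_m)] = (1/2)(1 + (√3/2)·k·m_z) for each k ∈ {±1}. -/
open Matrix Complex
open scoped Kronecker Matrix ComplexOrder

noncomputable section

private lemma pxx' : σx * σx = 1 := by
  ext i j; fin_cases i <;> fin_cases j <;> simp [σx, Matrix.mul_apply, Fin.sum_univ_two, Matrix.one_apply]
private lemma pyy' : σy * σy = 1 := by
  ext i j; fin_cases i <;> fin_cases j <;> simp [σy, Matrix.mul_apply, Fin.sum_univ_two, Matrix.one_apply]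
private lemma pzz' : σz * σz = 1 := by
  ext i j; fin_cases i <;> fin_cases j <;> simp [σz, Matrix.mul_apply, Fin.sum_univ_two, Matrix.one_apply]
private lemma pxy' : σx * σy = Complex.I • σz := by
  ext i j; fin_cases i <;> fin_cases j <;> simp [σx, σy, σz, Matrix.mul_apply, Fin.sum_univ_two]
private lemma pyx' : σy * σx = (-Complex.I) • σz := by
  ext i j; fin_cases i <;> fin_cases j <;> simp [σx, σy, σz, Matrix.mul_apply, Fin.sum_univ_two]
private lemma pyz' : σy * σz = Complex.I • σx := by
  ext i j; fin_cases i <;> fin_cases j <;> simp [σx, σy, σz, Matrix.mul_apply, Fin.sum_univ_two]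
private lemma pzy' : σz * σy = (-Complex.I) • σx := by
  ext i j; fin_cases i <;> fin_cases j <;> simp [σx, σy, σz, Matrix.mul_apply, Fin.sum_univ_two]
private lemma pzx' : σz * σx = Complex.I • σy := by
  ext i j; fin_cases i <;> fin_cases j <;> simp [σx, σy, σz, Matrix.mul_apply, Fin.sum_univ_two]
private lemma pxz' : σx * σz = (-Complex.I) • σy := by
  ext i j; fin_cases i <;> fin_cases j <;> simp [σx, σy, σz, Matrix.mul_apply, Fin.sum_univ_two]
private lemma hx' : σxᴴ = σx := by
  ext i j; fin_cases i <;> fin_cases j <;> simp [σx, Matrix.conjTranspose_apply]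
private lemma hy' : σyᴴ = σy := by
  ext i j; fin_cases i <;> fin_cases j <;> simp [σy, Matrix.conjTranspose_apply]
private lemma hz' : σzᴴ = σz := by
  ext i j; fin_cases i <;> fin_cases j <;> simp [σz, Matrix.conjTranspose_apply]

private lemma hs3 : ((Real.sqrt 3 : ℝ) : ℂ) ^ 2 = 3 := by
  rw [← Complex.ofReal_pow, Real.sq_sqrt (by norm_num : (0:ℝ) ≤ 3)]
  norm_num

/-- Pure state with Bloch vector (i,j,k)/√3. -/
private def rhoN (i j k : ℝ) : Matrix (Fin 2) (Fin 2) ℂ :=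
  ((2:ℝ)⁻¹ : ℂ) • 1 + (((Real.sqrt 3 : ℝ) : ℂ)*(i:ℂ)/6) • σx
    + (((Real.sqrt 3 : ℝ) : ℂ)*(j:ℂ)/6) • σy + (((Real.sqrt 3 : ℝ) : ℂ)*(k:ℂ)/6) • σz

/-- Singlet projector. -/
private def Psing : Matrix (Fin 2 × Fin 2) (Fin 2 × Fin 2) ℂ :=
  ((4:ℝ)⁻¹ : ℂ) • ((1 : Matrix (Fin 2 × Fin 2) (Fin 2 × Fin 2) ℂ) - σx ⊗ₖ σx - σy ⊗ₖ σy - σz ⊗ₖ σz)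

private lemma kronCT (A B : Matrix (Fin 2) (Fin 2) ℂ) : (A ⊗ₖ B)ᴴ = Aᴴ ⊗ₖ Bᴴ := by
  ext ⟨a,b⟩ ⟨c,d⟩
  simp [Matrix.conjTranspose_apply, Matrix.kroneckerMap_apply, mul_comm]

private lemma psd_smul {n : Type*} [Fintype n] {M : Matrix n n ℂ} (hM : M.PosSemidef) {c : ℝ}
    (hc : 0 ≤ c) : ((c : ℂ) • M).PosSemidef := by
  constructor
  · unfold Matrix.IsHermitian
    rw [Matrix.conjTranspose_smul, hM.1.eq]
    simp
  · intro x
    exact (hM.smul (show (0:ℂ) ≤ (c:ℂ) by exact_mod_cast hc)).2 x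

private lemma rhoNH (i j k : ℝ) : (rhoN i j k)ᴴ = rhoN i j k := by
  unfold rhoN
  simp [Matrix.conjTranspose_add, Matrix.conjTranspose_smul, hx', hy', hz', Complex.conj_ofReal,
    map_div₀, _root_.map_mul]

private lemma rhoNMul (i j k : ℝ) (hi : (i:ℂ)^2 = 1) (hj : (j:ℂ)^2 = 1) (hk : (k:ℂ)^2 = 1) :
    rhoN i j k * rhoN i j k = rhoN i j k := by
  unfold rhoN
  simp only [add_mul, mul_add, Matrix.smul_mul, Matrix.mul_smul, Matrix.one_mul, Matrix.mul_one,
    pxx', pyy', pzz', pxy', pyx', pyz', pzy', pzx', pxz']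
  match_scalars <;> first | ring1 | (ring_nf; simp only [hs3, hi, hj, hk, Complex.I_sq]; ring1)

private lemma PsingH : Psingᴴ = Psing := by
  unfold Psing
  simp [Matrix.conjTranspose_smul, Matrix.conjTranspose_sub, kronCT, hx', hy', hz',
    Complex.conj_ofReal]

private lemma PsingMul : Psing * Psing = Psing := by
  unfold Psing
  simp only [Matrix.smul_mul, Matrix.mul_smul, sub_mul, mul_sub, Matrix.one_mul, Matrix.mul_one,
    ← Matrix.mul_kronecker_mul, pxx', pyy', pzz', pxy', pyx', pyz', pzy', pzx', pxz',
    Matrix.one_kronecker_one, Matrix.smul_kronecker, Matrix.kronecker_smul]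
  match_scalars <;> first | ring1 | (ring_nf; simp only [Complex.I_sq]; ring1)

private lemma keyDecomp (i j k : ℝ) (hi : (i:ℂ)^2 = 1) (hj : (j:ℂ)^2 = 1) (hk : (k:ℂ)^2 = 1) :
    PiPar i j k = ((8⁻¹ : ℝ) : ℂ) • Psing + ((3/8 : ℝ) : ℂ) • (rhoN i j k ⊗ₖ rhoN i j k) := by
  unfold PiPar Psing rhoN
  push_cast
  simp only [Matrix.add_kronecker, Matrix.kronecker_add, Matrix.smul_kronecker,
    Matrix.kronecker_smul, Matrix.one_kronecker_one, smul_add, smul_sub, smul_smul]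
  match_scalars <;> first | ring1 | (ring_nf; simp only [hs3, hi, hj, hk, Complex.I_sq]; ring1)

private lemma piParPSD (i j k : ℝ) (hi : (i:ℂ)^2 = 1) (hj : (j:ℂ)^2 = 1) (hk : (k:ℂ)^2 = 1) :
    (PiPar i j k).PosSemidef := by
  rw [keyDecomp i j k hi hj hk]
  have h1 : Psingᴴ * Psing = Psing := by rw [PsingH, PsingMul]
  have h2 : (rhoN i j k ⊗ₖ rhoN i j k)ᴴ * (rhoN i j k ⊗ₖ rhoN i j k)
      = rhoN i j k ⊗ₖ rhoN i j k := by
    rw [kronCT, rhoNH, ← Matrix.mul_kronecker_mul, rhoNMul i j k hi hj hk]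
  refine Matrix.PosSemidef.add (psd_smul ?_ (by norm_num : (0:ℝ) ≤ 8⁻¹))
    (psd_smul ?_ (by norm_num : (0:ℝ) ≤ 3/8))
  · rw [← h1]; exact Matrix.posSemidef_conjTranspose_mul_self _
  · rw [← h2]; exact Matrix.posSemidef_conjTranspose_mul_self _

private lemma tracePiPar (i j k : ℝ) (m : Fin 3 → ℝ) :
    (PiPar i j k * (rho m ⊗ₖ rho m)).trace =
      (((4 + 2*Real.sqrt 3*(i*m 0 + j*m 1 + k*m 2)
        + 2*(i*j*(m 0)*(m 1) + j*k*(m 1)*(m 2) + k*i*(m 2)*(m 0)))/32 : ℝ) : ℂ) := by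
  unfold PiPar rho σx σy σz
  simp only [Matrix.trace, Matrix.diag, Matrix.mul_apply, Fintype.sum_prod_type,
    Fin.sum_univ_two, Matrix.kroneckerMap_apply, Matrix.smul_apply, Matrix.add_apply,
    Matrix.sub_apply, Matrix.one_apply, Matrix.of_apply, Matrix.cons_val', Matrix.cons_val_zero,
    Matrix.cons_val_one, Matrix.head_cons, Matrix.head_fin_const, Matrix.empty_val',
    Matrix.cons_val_fin_one, Prod.mk.injEq, smul_eq_mul]
  norm_num
  push_cast
  ring_nf
  simp only [Complex.I_sq]
  ring_nf

private lemma pm_mem_sq {i : ℝ} (hi : i ∈ pm) : (i:ℂ)^2 = 1 := by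
  have : i = 1 ∨ i = -1 := by simpa [pm] using hi
  rcases this with rfl | rfl <;> norm_num

end

/-- the parallel-configuration POVM Π↑↑ of Carmeli et al.: each effect
is PSD, the effects sum to the identity, and the marginals on ρ_m ⊗ ρ_m give the
unsharp spin statistics with sharpness √3/2. -/

theorem piPar_povm_and_marginals :
    (∀ i ∈ pm, ∀ j ∈ pm, ∀ k ∈ pm, (PiPar i j k).PosSemidef) ∧
    (∑ i ∈ pm, ∑ j ∈ pm, ∑ k ∈ pm, PiPar i j k = 1) ∧
    ∀ m : Fin 3 → ℝ, m 0 ^ 2 + m 1 ^ 2 + m 2 ^ 2 ≤ 1 →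
      (∀ i ∈ pm, ∑ j ∈ pm, ∑ k ∈ pm, (PiPar i j k * (rho m ⊗ₖ rho m)).trace
          = ((1 / 2 * (1 + Real.sqrt 3 / 2 * i * m 0) : ℝ) : ℂ)) ∧
      (∀ j ∈ pm, ∑ i ∈ pm, ∑ k ∈ pm, (PiPar i j k * (rho m ⊗ₖ rho m)).trace
          = ((1 / 2 * (1 + Real.sqrt 3 / 2 * j * m 1) : ℝ) : ℂ)) ∧
      (∀ k ∈ pm, ∑ i ∈ pm, ∑ j ∈ pm, (PiPar i j k * (rho m ⊗ₖ rho m)).trace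
          = ((1 / 2 * (1 + Real.sqrt 3 / 2 * k * m 2) : ℝ) : ℂ)) := by
  have hpm : ∀ f : ℝ → ℂ, ∑ x ∈ pm, f x = f 1 + f (-1) := by
    intro f
    rw [show pm = ({1, -1} : Finset ℝ) from rfl, Finset.sum_pair (by norm_num : (1:ℝ) ≠ -1)]
  refine ⟨?_, ?_, ?_⟩
  · intro i hi j hj k hk
    exact piParPSD i j k (pm_mem_sq hi) (pm_mem_sq hj) (pm_mem_sq hk)
  · have hpmM : ∀ f : ℝ → Matrix (Fin 2 × Fin 2) (Fin 2 × Fin 2) ℂ,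
        ∑ x ∈ pm, f x = f 1 + f (-1) := by
      intro f
      rw [show pm = ({1, -1} : Finset ℝ) from rfl, Finset.sum_pair (by norm_num : (1:ℝ) ≠ -1)]
    simp only [hpmM]
    unfold PiPar
    match_scalars <;> ring1
  · intro m _
    refine ⟨?_, ?_, ?_⟩
    · intro i hi
      simp only [hpm, tracePiPar]
      push_cast
      ring
    · intro j hj
      simp only [hpm, tracePiPar]
      push_cast
      ring
    · intro k hk
      simp only [hpm, tracePiPar]
      push_cast
      ring
end

section
/- There is no POVM on two parallel copies that reproduces the sharp spin statistics along all three orthogonal directions: there exists no family {π_{[i,j,k]}}_{i,j,k∈{±1}} of positive semidefinite 4×4 complex matrices with Σ_{i,j,k} π_{[i,j,k]} = I⊗I such that for every m ∈ ℝ³ with ‖m‖ = 1: Σ_{j,k} Tr[π_{[i,j,k]} (ρ_m ⊗ ρ_m)] = (1/2)(1 + i·m_x) for each i ∈ {±1}, Σ_{i,k} Tr[π_{[i,j,k]} (ρ_m ⊗ ρ_m)] = (1/2)(1 + j·m_y) for each j ∈ {±1}, and Σ_{i,j} Tr[π_{[i,j,k]} (ρ_m ⊗ ρ_m)] = (1/2)(1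 + k·m_z) for each k ∈ {±1}. -/
open Matrix Complex
open scoped Kronecker Matrix ComplexOrder

open Matrix Complex
open scoped Kronecker Matrix ComplexOrder

noncomputable section MyAuxTest

set_option maxHeartbeats 1000000

def vX' (s : ℝ) : Fin 2 × Fin 2 → ℂ := fun p => (2:ℂ)⁻¹ * (![1, (s:ℂ)] p.1 * ![1, (s:ℂ)] p.2)
def vY' (t : ℝ) : Fin 2 × Fin 2 → ℂ :=
  fun p => (2:ℂ)⁻¹ * (![1, Complex.I * (t:ℂ)] p.1 * ![1, Complex.I * (t:ℂ)] p.2)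

lemma rho_explicit (m : Fin 3 → ℝ) :
    rho m = !![(1 + (m 2 : ℂ))/2, ((m 0 : ℂ) - Complex.I * (m 1 : ℂ))/2;
               ((m 0 : ℂ) + Complex.I * (m 1 : ℂ))/2, (1 - (m 2 : ℂ))/2] := by
  ext a b
  fin_cases a <;> fin_cases b <;>
    simp [rho, σx, σy, σz, Matrix.one_apply] <;> ring

lemma rhoXvv (s : ℝ) (hs : s * s = 1) :
    rho ![s,0,0] ⊗ₖ rho ![s,0,0] = vecMulVec (vX' s) (star (vX' s)) := by
  rcases mul_self_eq_one_iff.mp hs with h | h <;> subst h <;> rw [rho_explicit] <;>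
    ext ⟨a,b⟩ ⟨c,d⟩ <;>
    fin_cases a <;> fin_cases b <;> fin_cases c <;> fin_cases d <;>
    norm_num [vX', vecMulVec_apply, kroneckerMap_apply, Matrix.cons_val_two, Matrix.tail_cons, Matrix.head_cons]

lemma rhoYvv (t : ℝ) (ht : t * t = 1) :
    rho ![0,t,0] ⊗ₖ rho ![0,t,0] = vecMulVec (vY' t) (star (vY' t)) := by
  rcases mul_self_eq_one_iff.mp ht with h | h <;> subst h <;> rw [rho_explicit] <;>
    ext ⟨a,b⟩ ⟨c,d⟩ <;>
    fin_cases a <;> fin_cases b <;> fin_cases c <;> fin_cases d <;>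
    norm_num [vY', vecMulVec_apply, kroneckerMap_apply, Complex.ext_iff, Matrix.cons_val_two, Matrix.tail_cons, Matrix.head_cons]

lemma rhoZ1vv : rho ![0,0,1] ⊗ₖ rho ![0,0,1] = vecMulVec (ket 0 0) (star (ket 0 0)) := by
  rw [rho_explicit]
  ext ⟨a,b⟩ ⟨c,d⟩
  fin_cases a <;> fin_cases b <;> fin_cases c <;> fin_cases d <;>
    norm_num [ket, vecMulVec_apply, kroneckerMap_apply, Prod.ext_iff, Matrix.cons_val_two, Matrix.tail_cons, Matrix.head_cons]

lemma rhoZm1vv : rho ![0,0,-1] ⊗ₖ rho ![0,0,-1] = vecMulVec (ket 1 1) (star (ket 1 1)) := by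
  rw [rho_explicit]
  ext ⟨a,b⟩ ⟨c,d⟩
  fin_cases a <;> fin_cases b <;> fin_cases c <;> fin_cases d <;>
    norm_num [ket, vecMulVec_apply, kroneckerMap_apply, Prod.ext_iff, Matrix.cons_val_two, Matrix.tail_cons, Matrix.head_cons]

lemma my_trace_vvH (M : Matrix (Fin 2 × Fin 2) (Fin 2 × Fin 2) ℂ) (v : Fin 2 × Fin 2 → ℂ) :
    (M * vecMulVec v (star v)).trace = star v ⬝ᵥ M *ᵥ v := by
  simp only [Matrix.trace, Matrix.diag, Matrix.mul_apply, Matrix.vecMulVec_apply,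
    dotProduct, Matrix.mulVec, Pi.star_apply, Finset.mul_sum]
  exact Finset.sum_congr rfl fun p _ => Finset.sum_congr rfl fun q _ => by ring

lemma nested_zero (f : ℝ → ℝ → ℂ) (hn : ∀ a ∈ pm, ∀ b ∈ pm, 0 ≤ f a b)
    (h : ∑ a ∈ pm, ∑ b ∈ pm, f a b = 0) : ∀ a ∈ pm, ∀ b ∈ pm, f a b = 0 := by
  have h1 : ∀ a ∈ pm, ∑ b ∈ pm, f a b = 0 :=
    (Finset.sum_eq_zero_iff_of_nonneg (fun a ha => Finset.sum_nonneg (hn a ha))).mp h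
  exact fun a ha => (Finset.sum_eq_zero_iff_of_nonneg (hn a ha)).mp (h1 a ha)

lemma ket_comb (i j : ℝ) (hi : i * i = 1) (hj : j * j = 1) :
    ket 0 0 = (1 - Complex.I * (i*j : ℝ)) • vX' (-i) + (1 + Complex.I * (i*j : ℝ)) • vY' (-j)
      + (Complex.I * (i*j : ℝ)) • ket 1 1 := by
  rcases mul_self_eq_one_iff.mp hi with h | h <;>
  rcases mul_self_eq_one_iff.mp hj with h' | h' <;> subst h <;> subst h' <;>
    funext p <;> obtain ⟨a, b⟩ := p <;> fin_cases a <;> fin_cases b <;>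
    norm_num [vX', vY', ket, Prod.ext_iff, Complex.ext_iff]

end MyAuxTest

/-- no POVM on two parallel copies reproduces the sharp spin
statistics along all three orthogonal directions for all pure states. -/
theorem no_sharp_parallel_povm :
    ¬ ∃ π : ℝ → ℝ → ℝ → Matrix (Fin 2 × Fin 2) (Fin 2 × Fin 2) ℂ,
      (∀ i ∈ pm, ∀ j ∈ pm, ∀ k ∈ pm, (π i j k).PosSemidef) ∧
      (∑ i ∈ pm, ∑ j ∈ pm, ∑ k ∈ pm, π i j k = 1) ∧
      ∀ m : Fin 3 → ℝ, m 0 ^ 2 + m 1 ^ 2 + m 2 ^ 2 = 1 →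
        (∀ i ∈ pm, ∑ j ∈ pm, ∑ k ∈ pm, (π i j k * (rho m ⊗ₖ rho m)).trace
            = ((1 / 2 * (1 + i * m 0) : ℝ) : ℂ)) ∧
        (∀ j ∈ pm, ∑ i ∈ pm, ∑ k ∈ pm, (π i j k * (rho m ⊗ₖ rho m)).trace
            = ((1 / 2 * (1 + j * m 1) : ℝ) : ℂ)) ∧
        (∀ k ∈ pm, ∑ i ∈ pm, ∑ j ∈ pm, (π i j k * (rho m ⊗ₖ rho m)).trace
            = ((1 / 2 * (1 + k * m 2) : ℝ) : ℂ)) := by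
  rintro ⟨π, hpsd, -, hstat⟩
  have h1 : (1:ℝ) ∈ pm := by norm_num [pm]
  have hsq : ∀ x ∈ pm, x * x = 1 := by
    intro x hx
    rcases (by simpa [pm] using hx : x = 1 ∨ x = -1) with h | h <;> simp [h]
  -- x-direction: π i j k kills vX' (-i)
  have killX : ∀ i ∈ pm, ∀ j ∈ pm, ∀ k ∈ pm, π i j k *ᵥ vX' (-i) = 0 := by
    intro i hi j hj k hk
    have hii := hsq i hi
    have hx := (hstat ![-i,0,0] (by norm_num [pow_two, Matrix.cons_val_two, Matrix.tail_cons, Matrix.head_cons]; nlinarith)).1 i hi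
    have htr : ∀ j' k', (π i j' k' * (rho ![-i,0,0] ⊗ₖ rho ![-i,0,0])).trace
        = star (vX' (-i)) ⬝ᵥ π i j' k' *ᵥ vX' (-i) := fun j' k' => by
      rw [rhoXvv (-i) (by nlinarith), my_trace_vvH]
    rw [Finset.sum_congr rfl fun j' _ => Finset.sum_congr rfl fun k' _ => htr j' k'] at hx
    have h0 : ((1 / 2 * (1 + i * (![-i,0,0] : Fin 3 → ℝ) 0) : ℝ) : ℂ) = 0 := by
      have : (1 / 2 * (1 + i * (![-i,0,0] : Fin 3 → ℝ) 0) : ℝ) = 0 := by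
        norm_num [Matrix.cons_val_zero]; nlinarith
      rw [this, Complex.ofReal_zero]
    rw [h0] at hx
    exact ((hpsd i hi j hj k hk).dotProduct_mulVec_zero_iff (vX' (-i))).mp
      (nested_zero _ (fun a ha b hb => (hpsd i hi a ha b hb).dotProduct_mulVec_nonneg _) hx j hj k hk)
  -- y-direction: π i j k kills vY' (-j)
  have killY : ∀ i ∈ pm, ∀ j ∈ pm, ∀ k ∈ pm, π i j k *ᵥ vY' (-j) = 0 := by
    intro i hi j hj k hk
    have hjj := hsq j hj
    have hy := (hstat ![0,-j,0] (by norm_num [pow_two, Matrix.cons_val_two, Matrix.tail_cons, Matrix.head_cons]; nlinarith)).2.1 j hj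
    have htr : ∀ i' k', (π i' j k' * (rho ![0,-j,0] ⊗ₖ rho ![0,-j,0])).trace
        = star (vY' (-j)) ⬝ᵥ π i' j k' *ᵥ vY' (-j) := fun i' k' => by
      rw [rhoYvv (-j) (by nlinarith), my_trace_vvH]
    rw [Finset.sum_congr rfl fun i' _ => Finset.sum_congr rfl fun k' _ => htr i' k'] at hy
    have h0 : ((1 / 2 * (1 + j * (![0,-j,0] : Fin 3 → ℝ) 1) : ℝ) : ℂ) = 0 := by
      have : (1 / 2 * (1 + j * (![0,-j,0] : Fin 3 → ℝ) 1) : ℝ) = 0 := by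
        norm_num; nlinarith
      rw [this, Complex.ofReal_zero]
    rw [h0] at hy
    exact ((hpsd i hi j hj k hk).dotProduct_mulVec_zero_iff (vY' (-j))).mp
      (nested_zero _ (fun a ha b hb => (hpsd a ha j hj b hb).dotProduct_mulVec_nonneg _) hy i hi k hk)
  -- z-direction with outcome k = 1: π i j 1 kills ket 1 1
  have killZ : ∀ i ∈ pm, ∀ j ∈ pm, π i j 1 *ᵥ ket 1 1 = 0 := by
    intro i hi j hj
    have hz := (hstat ![0,0,-1] (by norm_num [Matrix.cons_val_two, Matrix.tail_cons, Matrix.head_cons])).2.2 1 h1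
    have htr : ∀ i' j', (π i' j' 1 * (rho ![0,0,-1] ⊗ₖ rho ![0,0,-1])).trace
        = star (ket 1 1) ⬝ᵥ π i' j' 1 *ᵥ ket 1 1 := fun i' j' => by
      rw [rhoZm1vv, my_trace_vvH]
    rw [Finset.sum_congr rfl fun i' _ => Finset.sum_congr rfl fun j' _ => htr i' j'] at hz
    have h0 : ((1 / 2 * (1 + 1 * (![0,0,-1] : Fin 3 → ℝ) 2) : ℝ) : ℂ) = 0 := by norm_num [Matrix.cons_val_two, Matrix.tail_cons, Matrix.head_cons]
    rw [h0] at hz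
    exact ((hpsd i hi j hj 1 h1).dotProduct_mulVec_zero_iff (ket 1 1)).mp
      (nested_zero _ (fun a ha b hb => (hpsd a ha b hb 1 h1).dotProduct_mulVec_nonneg _) hz i hi j hj)
  -- hence π i j 1 kills ket 0 0
  have kill00 : ∀ i ∈ pm, ∀ j ∈ pm, π i j 1 *ᵥ ket 0 0 = 0 := by
    intro i hi j hj
    rw [ket_comb i j (hsq i hi) (hsq j hj), Matrix.mulVec_add, Matrix.mulVec_add,
      Matrix.mulVec_smul, Matrix.mulVec_smul, Matrix.mulVec_smul,
      killX i hi j hj 1 h1, killY i hi j hj 1 h1, killZ i hi j hj]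
    simp
  -- contradiction at m = e_z, k = 1
  have hfin := (hstat ![0,0,1] (by norm_num [Matrix.cons_val_two, Matrix.tail_cons, Matrix.head_cons])).2.2 1 h1
  have htr : ∀ i' ∈ pm, ∀ j' ∈ pm, (π i' j' 1 * (rho ![0,0,1] ⊗ₖ rho ![0,0,1])).trace
      = 0 := fun i' hi' j' hj' => by
    rw [rhoZ1vv, my_trace_vvH, kill00 i' hi' j' hj', dotProduct_zero]
  rw [Finset.sum_congr rfl fun i' hi' => Finset.sum_congr rfl fun j' hj' => htr i' hi' j' hj']
    at hfin
  norm_num [Matrix.cons_val_two, Matrix.tail_cons, Matrix.head_cons] at hfin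
end
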